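/- Sandwich bound from the two LP recursions: with γ^L_k defined via the infimum LP recursion and γ̄_k defined via the supremum LP recursion over the same interval feasible sets F^i_k, it holds for every k ∈ {0, …, H} and every x ∈ X that γ^L_k(x) ≤ V_k(x) ≤ γ̄_k(x); hence the probabilistic safety 1 − V_0(x_0) lies in the interval [1 − γ̄_0(x_0), 1 − γ^L_0(x_0)] for every initial state x_0. -/

import Mathlib

open MeasureTheory ProbabilityTheory

/-- **Sandwich bound from the two LP recursions:** with `γ^L_k` defined via the
infimum LP recursion and `γ̄_k` via the supremum LP recursion over the same
interval feasible sets `F^i_k`, for every `k ∈ {0,…,H}` and `x ∈ X` one has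
`γ^L_k(x) ≤ V_k(x) ≤ γ̄_k(x)`; hence the probabilistic safety `1 - V_0(x₀)`
lies in `[1 - γ̄_0(x₀), 1 - γ^L_0(x₀)]` for every initial state `x₀`. -/
theorem imc_sandwich_bound
    {X : Type*} [MeasurableSpace X] [StandardBorelSpace X]
    -- the partition `X_1, …, X_{n_p}, X_{n_p+1}` of `X`
    (np : ℕ) (P : Fin (np + 1) → Set X)
    (hPmeas : ∀ i, MeasurableSet (P i))
    (hPne : ∀ i, (P i).Nonempty)
    (hPdisj : Pairwise (Function.onFun Disjoint P))
    (hPcover : ⋃ i, P i = Set.univ)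
    -- unsafe region `X_u = X_{n_p+1}` and safe set `X_s`
    (Xu Xs : Set X)
    (hXu : Xu = P (Fin.last np))
    (hXs : Xs = Set.univ \ Xu)
    -- horizon and closed-loop Markov kernels under the fixed policy
    (H : ℕ)
    (T : ℕ → Kernel X X)
    (hT : ∀ k, IsMarkovKernel (T k))
    -- unsafety value functions `V_k`
    (V : ℕ → X → ℝ)
    (hVH : ∀ x, V H x = Xu.indicator (fun _ => (1 : ℝ)) x)
    (hVk : ∀ k < H, ∀ x,
      V k x = Xu.indicator (fun _ => (1 : ℝ)) x +
        Xs.indicator (fun _ => (1 : ℝ)) x * ∫ y, V (k + 1) y ∂((T k) x))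
    -- the interval feasible sets `F^i_k`
    (Fset : ℕ → Fin (np + 1) → Set (Fin (np + 1) → ℝ))
    (hFset : ∀ k < H, ∀ i : Fin (np + 1), i ≠ Fin.last np →
      Fset k i = {t | (∀ j, t j ∈ Set.Icc (0 : ℝ) 1) ∧
        (∀ j, (⨅ x : P i, ((T k) (x : X) (P j)).toReal) ≤ t j ∧
          t j ≤ ⨆ x : P i, ((T k) (x : X) (P j)).toReal) ∧
        ∑ j, t j = 1})
    -- the supremum-LP values `γ̄_{k,i}`
    (γup : ℕ → Fin (np + 1) → ℝ)
    (hγupH : ∀ i, γup H i = ⨆ x : P i, Xu.indicator (fun _ => (1 : ℝ)) (x : X))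
    (hγupk : ∀ k < H, ∀ i : Fin (np + 1), i ≠ Fin.last np → γup k i =
      ⨆ t : Fset k i, ∑ j, γup (k + 1) j * (t : Fin (np + 1) → ℝ) j)
    (hγuplast : ∀ k < H, γup k (Fin.last np) = 1)
    -- the infimum-LP values `γ^L_{k,i}`
    (γlo : ℕ → Fin (np + 1) → ℝ)
    (hγloH : ∀ i, γlo H i = ⨅ x : P i, Xu.indicator (fun _ => (1 : ℝ)) (x : X))
    (hγlok : ∀ k < H, ∀ i : Fin (np + 1), i ≠ Fin.last np → γlo k i =
      ⨅ t : Fset k i, ∑ j, γlo (k + 1) j * (t : Fin (np + 1) → ℝ) j)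
    (hγlolast : ∀ k < H, γlo k (Fin.last np) = 1)
    -- the piecewise-constant extensions
    (γupfun γlofun : ℕ → X → ℝ)
    (hγupfun : ∀ k, ∀ x, ∀ i : Fin (np + 1), x ∈ P i → γupfun k x = γup k i)
    (hγlofun : ∀ k, ∀ x, ∀ i : Fin (np + 1), x ∈ P i → γlofun k x = γlo k i) :
    (∀ k ≤ H, ∀ x : X, γlofun k x ≤ V k x ∧ V k x ≤ γupfun k x) ∧
      ∀ x0 : X, (1 - V 0 x0) ∈ Set.Icc (1 - γupfun 0 x0) (1 - γlofun 0 x0) := by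

  classical
  -- basic partition facts
  have hmem : ∀ x : X, ∃ i, x ∈ P i := by
    intro x
    have hx : x ∈ ⋃ i, P i := by rw [hPcover]; trivial
    simpa using hx
  have huniq : ∀ (x : X) (i j : Fin (np + 1)), x ∈ P i → x ∈ P j → i = j := by
    intro x i j hi hj
    by_contra h
    exact Set.disjoint_left.mp (hPdisj h) hi hj
  have hXuMeas : MeasurableSet Xu := by rw [hXu]; exact hPmeas _
  have hind : ∀ x : X, 0 ≤ Xu.indicator (fun _ => (1 : ℝ)) x ∧
      Xu.indicator (fun _ => (1 : ℝ)) x ≤ 1 := by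
    intro x
    by_cases hx : x ∈ Xu
    · simp [Set.indicator_of_mem hx]
    · simp [Set.indicator_of_notMem hx]
  -- V is measurable and bounded in [0,1]
  have hVgood : ∀ m k, k + m = H → Measurable (V k) ∧ ∀ x, 0 ≤ V k x ∧ V k x ≤ 1 := by
    intro m
    induction m with
    | zero =>
      intro k hk
      have hkH : k = H := by omega
      subst hkH
      have hVeq : V k = Xu.indicator (fun _ => (1 : ℝ)) := funext hVH
      refine ⟨hVeq ▸ measurable_const.indicator hXuMeas, fun x => ?_⟩
      rw [hVH x]; exact hind x
    | succ m ih =>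
      intro k hk
      have hkH : k < H := by omega
      obtain ⟨hmeas, hbd⟩ := ih (k + 1) (by omega)
      haveI := hT k
      have hIntMeas : Measurable fun x => ∫ y, V (k + 1) y ∂((T k) x) := by
        have : StronglyMeasurable (Function.uncurry fun (_ : X) (y : X) => V (k + 1) y) :=
          (hmeas.comp measurable_snd).stronglyMeasurable
        exact this.integral_kernel_prod_right.measurable
      have hVeq : V k = fun x => Xu.indicator (fun _ => (1 : ℝ)) x +
          Xs.indicator (fun _ => (1 : ℝ)) x * ∫ y, V (k + 1) y ∂((T k) x) :=
        funext (hVk k hkH)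
      have hXsMeas : MeasurableSet Xs := by rw [hXs]; exact MeasurableSet.univ.diff hXuMeas
      have hIbd : ∀ x : X, 0 ≤ (∫ y, V (k + 1) y ∂((T k) x)) ∧
          (∫ y, V (k + 1) y ∂((T k) x)) ≤ 1 := by
        intro x
        haveI : IsProbabilityMeasure ((T k) x) := IsMarkovKernel.isProbabilityMeasure x
        have hint : Integrable (V (k + 1)) ((T k) x) := by
          refine (integrable_const (1 : ℝ)).mono' hmeas.aestronglyMeasurable ?_
          filter_upwards with y
          rw [Real.norm_eq_abs, abs_le]
          exact ⟨by linarith [(hbd y).1], (hbd y).2⟩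
        constructor
        · exact integral_nonneg fun y => (hbd y).1
        · calc (∫ y, V (k + 1) y ∂((T k) x)) ≤ ∫ _, (1 : ℝ) ∂((T k) x) :=
                integral_mono hint (integrable_const (1 : ℝ)) fun y => (hbd y).2
            _ = 1 := by simp
      constructor
      · rw [hVeq]
        exact (measurable_const.indicator hXuMeas).add
          ((measurable_const.indicator hXsMeas).mul hIntMeas)
      · intro x
        rw [hVk k hkH x]
        by_cases hx : x ∈ Xu
        · have hxs : x ∉ Xs := by rw [hXs]; simp [hx]
          simp [Set.indicator_of_mem hx, Set.indicator_of_notMem hxs]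
        · have hxs : x ∈ Xs := by rw [hXs]; exact ⟨trivial, hx⟩
          have := hIbd x
          simp only [Set.indicator_of_notMem hx, Set.indicator_of_mem hxs, one_mul, zero_add]
          exact this
  -- feasibility of the transition vector
  have hFmem : ∀ k < H, ∀ i : Fin (np + 1), i ≠ Fin.last np → ∀ x ∈ P i,
      (fun j => ((T k) x (P j)).toReal) ∈ Fset k i := by
    intro k hk i hi x hx
    haveI := hT k
    haveI : IsProbabilityMeasure ((T k) x) := IsMarkovKernel.isProbabilityMeasure x
    rw [hFset k hk i hi]
    simp only [Set.mem_setOf_eq]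
    haveI : Nonempty (P i) := (hPne i).to_subtype
    have hle1 : ∀ (z : X) (j : Fin (np + 1)), ((T k) z (P j)).toReal ≤ 1 := by
      intro z j
      haveI : IsProbabilityMeasure ((T k) z) := IsMarkovKernel.isProbabilityMeasure z
      have h1 : (T k) z (P j) ≤ 1 := prob_le_one
      calc ((T k) z (P j)).toReal ≤ (1 : ENNReal).toReal :=
            ENNReal.toReal_mono (by simp) h1
        _ = 1 := by simp
    refine ⟨fun j => ⟨ENNReal.toReal_nonneg, hle1 x j⟩, fun j => ?_, ?_⟩
    · have hlbB : BddBelow (Set.range fun z : P i => ((T k) (z : X) (P j)).toReal) := by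
        refine ⟨0, ?_⟩
        rintro _ ⟨z, rfl⟩
        exact ENNReal.toReal_nonneg
      have hubB : BddAbove (Set.range fun z : P i => ((T k) (z : X) (P j)).toReal) := by
        refine ⟨1, ?_⟩
        rintro _ ⟨z, rfl⟩
        exact hle1 z j
      exact ⟨ciInf_le hlbB ⟨x, hx⟩, le_ciSup hubB ⟨x, hx⟩⟩
    · have hsum : ∑' j, (T k) x (P j) = 1 := by
        rw [← measure_iUnion hPdisj hPmeas, hPcover, measure_univ]
      rw [tsum_fintype] at hsum
      rw [← ENNReal.toReal_sum (fun j _ => measure_ne_top _ _), hsum]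
      simp
  -- bounds on sums over feasible vectors
  have hsumbd : ∀ k < H, ∀ i : Fin (np + 1), i ≠ Fin.last np →
      ∀ γ : Fin (np + 1) → ℝ, (∀ j, 0 ≤ γ j ∧ γ j ≤ 1) →
      ∀ t ∈ Fset k i, 0 ≤ ∑ j, γ j * t j ∧ ∑ j, γ j * t j ≤ 1 := by
    intro k hk i hi γ hγ t ht
    rw [hFset k hk i hi] at ht
    obtain ⟨h01, _, hsum⟩ := ht
    constructor
    · exact Finset.sum_nonneg fun j _ => mul_nonneg (hγ j).1 (h01 j).1
    · calc ∑ j, γ j * t j ≤ ∑ j, t j :=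
            Finset.sum_le_sum fun j _ => mul_le_of_le_one_left (h01 j).1 (hγ j).2
        _ = 1 := hsum
  -- bounds on the LP values
  have hγbd : ∀ m k, k + m = H → ∀ i : Fin (np + 1),
      (0 ≤ γup k i ∧ γup k i ≤ 1) ∧ (0 ≤ γlo k i ∧ γlo k i ≤ 1) := by
    intro m
    induction m with
    | zero =>
      intro k hk i
      have hkH : k = H := by omega
      subst hkH
      haveI : Nonempty (P i) := (hPne i).to_subtype
      obtain ⟨x0, hx0⟩ := hPne i
      have hub : BddAbove (Set.range fun x : P i => Xu.indicator (fun _ => (1 : ℝ)) (x : X)) :=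
        ⟨1, by rintro _ ⟨z, rfl⟩; exact (hind z).2⟩
      have hlb : BddBelow (Set.range fun x : P i => Xu.indicator (fun _ => (1 : ℝ)) (x : X)) :=
        ⟨0, by rintro _ ⟨z, rfl⟩; exact (hind z).1⟩
      rw [hγupH i, hγloH i]
      refine ⟨⟨le_trans (hind x0).1 (le_ciSup hub ⟨x0, hx0⟩),
          ciSup_le fun z => (hind z).2⟩,
        ⟨le_ciInf fun z => (hind z).1,
          le_trans (ciInf_le hlb ⟨x0, hx0⟩) (hind x0).2⟩⟩
    | succ m ih =>
      intro k hk i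
      have hkH : k < H := by omega
      have ih1 : ∀ j, (0 ≤ γup (k + 1) j ∧ γup (k + 1) j ≤ 1) ∧
          (0 ≤ γlo (k + 1) j ∧ γlo (k + 1) j ≤ 1) := ih (k + 1) (by omega)
      by_cases hi : i = Fin.last np
      · subst hi
        rw [hγuplast k hkH, hγlolast k hkH]
        norm_num
      · obtain ⟨x0, hx0⟩ := hPne i
        have ht0 := hFmem k hkH i hi x0 hx0
        haveI : Nonempty (Fset k i) := ⟨⟨_, ht0⟩⟩
        have hubd := fun t (htm : t ∈ Fset k i) =>
          hsumbd k hkH i hi (γup (k + 1)) (fun j => (ih1 j).1) t htm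
        have hlbd := fun t (htm : t ∈ Fset k i) =>
          hsumbd k hkH i hi (γlo (k + 1)) (fun j => (ih1 j).2) t htm
        rw [hγupk k hkH i hi, hγlok k hkH i hi]
        have hubA : BddAbove (Set.range fun t : Fset k i =>
            ∑ j, γup (k + 1) j * (t : Fin (np + 1) → ℝ) j) :=
          ⟨1, by rintro _ ⟨t, rfl⟩; exact (hubd t t.2).2⟩
        have hlbA : BddBelow (Set.range fun t : Fset k i =>
            ∑ j, γlo (k + 1) j * (t : Fin (np + 1) → ℝ) j) :=
          ⟨0, by rintro _ ⟨t, rfl⟩; exact (hlbd t t.2).1⟩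
        refine ⟨⟨le_trans (hubd _ ht0).1 (le_ciSup hubA ⟨_, ht0⟩),
            ciSup_le fun t => (hubd t t.2).2⟩,
          ⟨le_ciInf fun t => (hlbd t t.2).1,
            le_trans (ciInf_le hlbA ⟨_, ht0⟩) (hlbd _ ht0).2⟩⟩
  -- main sandwich by downward induction
  have main : ∀ m k, k + m = H → ∀ (x : X) (i : Fin (np + 1)), x ∈ P i →
      γlo k i ≤ V k x ∧ V k x ≤ γup k i := by
    intro m
    induction m with
    | zero =>
      intro k hk x i hx
      have hkH : k = H := by omega
      subst hkH
      haveI : Nonempty (P i) := (hPne i).to_subtype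
      have hub : BddAbove (Set.range fun x : P i => Xu.indicator (fun _ => (1 : ℝ)) (x : X)) :=
        ⟨1, by rintro _ ⟨z, rfl⟩; exact (hind z).2⟩
      have hlb : BddBelow (Set.range fun x : P i => Xu.indicator (fun _ => (1 : ℝ)) (x : X)) :=
        ⟨0, by rintro _ ⟨z, rfl⟩; exact (hind z).1⟩
      rw [hVH x, hγupH i, hγloH i]
      exact ⟨ciInf_le hlb ⟨x, hx⟩, le_ciSup hub ⟨x, hx⟩⟩
    | succ m ih =>
      intro k hk x i hx
      have hkH : k < H := by omega
      have ihf : ∀ (y : X) (j : Fin (np + 1)), y ∈ P j →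
          γlo (k + 1) j ≤ V (k + 1) y ∧ V (k + 1) y ≤ γup (k + 1) j :=
        ih (k + 1) (by omega)
      by_cases hi : i = Fin.last np
      · subst hi
        have hxu : x ∈ Xu := hXu ▸ hx
        have hxs : x ∉ Xs := by rw [hXs]; simp [hxu]
        rw [hVk k hkH x, Set.indicator_of_mem hxu, Set.indicator_of_notMem hxs,
          hγuplast k hkH, hγlolast k hkH]
        norm_num
      · -- safe partition element
        have hxu : x ∉ Xu := by
          rw [hXu]
          intro hxl
          exact hi (huniq x i (Fin.last np) hx hxl)
        have hxs : x ∈ Xs := by rw [hXs]; exact ⟨trivial, hxu⟩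
        have hVkx : V k x = ∫ y, V (k + 1) y ∂((T k) x) := by
          rw [hVk k hkH x, Set.indicator_of_notMem hxu, Set.indicator_of_mem hxs]
          ring
        haveI := hT k
        haveI : IsProbabilityMeasure ((T k) x) := IsMarkovKernel.isProbabilityMeasure x
        obtain ⟨hVmeas, hVbd⟩ := hVgood m (k + 1) (by omega)
        have hintV : Integrable (V (k + 1)) ((T k) x) := by
          refine (integrable_const (1 : ℝ)).mono' hVmeas.aestronglyMeasurable ?_
          filter_upwards with y
          rw [Real.norm_eq_abs, abs_le]
          exact ⟨by linarith [(hVbd y).1], (hVbd y).2⟩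
        -- the piecewise-constant extensions as sums of indicators
        have hupfun : γupfun (k + 1) = fun y => ∑ j, (P j).indicator
            (fun _ => γup (k + 1) j) y := by
          funext y
          obtain ⟨j, hj⟩ := hmem y
          rw [hγupfun (k + 1) y j hj]
          rw [Finset.sum_eq_single j]
          · rw [Set.indicator_of_mem hj]
          · intro b _ hb
            rw [Set.indicator_of_notMem]
            intro hyb
            exact hb (huniq y b j hyb hj)
          · simp
        have hlofun : γlofun (k + 1) = fun y => ∑ j, (P j).indicator
            (fun _ => γlo (k + 1) j) y := by
          funext y
          obtain ⟨j, hj⟩ := hmem y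
          rw [hγlofun (k + 1) y j hj]
          rw [Finset.sum_eq_single j]
          · rw [Set.indicator_of_mem hj]
          · intro b _ hb
            rw [Set.indicator_of_notMem]
            intro hyb
            exact hb (huniq y b j hyb hj)
          · simp
        have hintup : Integrable (γupfun (k + 1)) ((T k) x) := by
          rw [hupfun]
          exact integrable_finset_sum _ fun j _ =>
            (integrable_const (γup (k + 1) j)).indicator (hPmeas j)
        have hintlo : Integrable (γlofun (k + 1)) ((T k) x) := by
          rw [hlofun]
          exact integrable_finset_sum _ fun j _ =>
            (integrable_const (γlo (k + 1) j)).indicator (hPmeas j)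
        set t : Fin (np + 1) → ℝ := fun j => (((T k) x) (P j)).toReal with htdef
        have hintupval : ∫ y, γupfun (k + 1) y ∂((T k) x) = ∑ j, γup (k + 1) j * t j := by
          rw [hupfun, integral_finset_sum _ fun j _ =>
            (integrable_const (γup (k + 1) j)).indicator (hPmeas j)]
          refine Finset.sum_congr rfl fun j _ => ?_
          rw [integral_indicator_const _ (hPmeas j), smul_eq_mul, mul_comm]
          rfl
        have hintloval : ∫ y, γlofun (k + 1) y ∂((T k) x) = ∑ j, γlo (k + 1) j * t j := by
          rw [hlofun, integral_finset_sum _ fun j _ =>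
            (integrable_const (γlo (k + 1) j)).indicator (hPmeas j)]
          refine Finset.sum_congr rfl fun j _ => ?_
          rw [integral_indicator_const _ (hPmeas j), smul_eq_mul, mul_comm]
          rfl
        have htmem : t ∈ Fset k i := hFmem k hkH i hi x hx
        haveI : Nonempty (Fset k i) := ⟨⟨t, htmem⟩⟩
        have ih1 : ∀ j, (0 ≤ γup (k + 1) j ∧ γup (k + 1) j ≤ 1) ∧
            (0 ≤ γlo (k + 1) j ∧ γlo (k + 1) j ≤ 1) := hγbd m (k + 1) (by omega)
        have hubA : BddAbove (Set.range fun s : Fset k i =>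
            ∑ j, γup (k + 1) j * (s : Fin (np + 1) → ℝ) j) :=
          by
            refine ⟨1, ?_⟩
            rintro _ ⟨s, rfl⟩
            exact (hsumbd k hkH i hi (γup (k + 1)) (fun j => (ih1 j).1) s s.2).2
        have hlbA : BddBelow (Set.range fun s : Fset k i =>
            ∑ j, γlo (k + 1) j * (s : Fin (np + 1) → ℝ) j) :=
          by
            refine ⟨0, ?_⟩
            rintro _ ⟨s, rfl⟩
            exact (hsumbd k hkH i hi (γlo (k + 1)) (fun j => (ih1 j).2) s s.2).1
        constructor
        · rw [hγlok k hkH i hi, hVkx]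
          calc (⨅ s : Fset k i, ∑ j, γlo (k + 1) j * (s : Fin (np + 1) → ℝ) j)
              ≤ ∑ j, γlo (k + 1) j * t j := ciInf_le hlbA ⟨t, htmem⟩
            _ = ∫ y, γlofun (k + 1) y ∂((T k) x) := hintloval.symm
            _ ≤ ∫ y, V (k + 1) y ∂((T k) x) := by
                refine integral_mono hintlo hintV fun y => ?_
                obtain ⟨j, hj⟩ := hmem y
                rw [hγlofun (k + 1) y j hj]
                exact (ihf y j hj).1
        · rw [hγupk k hkH i hi, hVkx]
          calc (∫ y, V (k + 1) y ∂((T k) x))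
              ≤ ∫ y, γupfun (k + 1) y ∂((T k) x) := by
                refine integral_mono hintV hintup fun y => ?_
                obtain ⟨j, hj⟩ := hmem y
                rw [hγupfun (k + 1) y j hj]
                exact (ihf y j hj).2
            _ = ∑ j, γup (k + 1) j * t j := hintupval
            _ ≤ ⨆ s : Fset k i, ∑ j, γup (k + 1) j * (s : Fin (np + 1) → ℝ) j :=
                le_ciSup hubA ⟨t, htmem⟩
  have key : ∀ k ≤ H, ∀ x : X, γlofun k x ≤ V k x ∧ V k x ≤ γupfun k x := by
    intro k hk x
    obtain ⟨i, hi⟩ := hmem x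
    have h := main (H - k) k (by omega) x i hi
    rw [hγlofun k x i hi, hγupfun k x i hi]
    exact h
  refine ⟨key, fun x0 => ?_⟩
  obtain ⟨h1, h2⟩ := key 0 (Nat.zero_le H) x0
  exact ⟨by linarith, by linarith⟩
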